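/- Let C and D be braided finite tensor categories over an algebraically closed field, with C non-degenerate, and let F: C → D be a braided tensor functor. Then F is full, hence fully faithful. -/

import Mathlib

set_option autoImplicit false
set_option maxHeartbeats 1000000

/-!
STATEMENT 15.
Let `C` and `D` be braided finite tensor categories over an algebraically closed
field, with `C` non-degenerate, and let `F : C → D` be a braided tensor functor.
Then `F` is full, hence fully faithful.
-/

open CategoryTheory MonoidalCategory Category Limits

universe v u

namespace Paper

/-- Finiteness conditions for a finite abelian category. -/
class FiniteCategoryData (k : Type) [Field k] (D : Type u) [Category.{v} D]
    [Preadditive D] [Linear k D] : Prop where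
  homFinite : ∀ X Y : D, FiniteDimensional k (X ⟶ Y)
  noetherian : ∀ X : D, IsNoetherianObject X
  artinian : ∀ X : D, IsArtinianObject X
  enoughProjectives : EnoughProjectives D
  finitelyManySimples : ∃ (ι : Type) (_ : Finite ι) (S : ι → D),
    (∀ i, Simple (S i)) ∧ ∀ X : D, Simple X → ∃ i, Nonempty (X ≅ S i)

/-- `End(𝟙) ≅ k`. -/
def UnitEndIsBase (k : Type) [Field k] (D : Type u) [Category.{v} D] [Preadditive D]
    [Linear k D] [MonoidalCategory D] : Prop :=
  Function.Bijective fun a : k => a • (𝟙 (𝟙_ D))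

/-- Non-degeneracy of a braided category: every transparent object is a finite direct
sum of copies of the unit, i.e. the Müger center is equivalent to `Vec`. -/
def IsNondegenerate (D : Type u) [Category.{v} D] [MonoidalCategory D]
    [BraidedCategory D] [Preadditive D] : Prop :=
  ∀ X : D, (∀ Y : D, (β_ X Y).hom ≫ (β_ Y X).hom = 𝟙 (X ⊗ Y)) →
    ∃ (n : ℕ) (p : Fin n → (𝟙_ D ⟶ X)) (q : Fin n → (X ⟶ 𝟙_ D)),
      (∀ i j, p i ≫ q j = (if i = j then 𝟙 (𝟙_ D) else 0)) ∧
      (∑ i, q i ≫ p i) = 𝟙 X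

open CategoryTheory.Functor.LaxMonoidal CategoryTheory.Functor.OplaxMonoidal
  CategoryTheory.Functor.Monoidal

section Generic

variable {E : Type u} [Category.{v} E] [MonoidalCategory.{v} E]

theorem uncur_cur {P Q A : E} (co : 𝟙_ E ⟶ P ⊗ Q) (ev : Q ⊗ P ⟶ 𝟙_ E)
    (zig : (co ▷ P) ≫ (α_ P Q P).hom ≫ (P ◁ ev) = (λ_ P).hom ≫ (ρ_ P).inv)
    (g : P ⟶ A) :
    (λ_ P).inv ≫ ((co ≫ (g ▷ Q)) ▷ P) ≫ (α_ A Q P).hom ≫ (A ◁ ev) ≫ (ρ_ A).hom = g := by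
  rw [comp_whiskerRight, assoc]
  slice_lhs 3 4 => rw [associator_naturality_left]
  slice_lhs 4 5 => rw [← whisker_exchange]
  slice_lhs 5 6 => rw [rightUnitor_naturality]
  slice_lhs 2 4 => rw [zig]
  simp

end Generic

section Funct

variable {C : Type u} [Category.{v} C] [MonoidalCategory.{v} C]
variable {D : Type u} [Category.{v} D] [MonoidalCategory.{v} D]
variable (F : C ⥤ D) [F.Monoidal]

/-- Monoidal functor transports the "uncurry" composite. -/
theorem map_uncur {A X : C} [HasRightDual X] (h : 𝟙_ C ⟶ A ⊗ (Xᘁ)) :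
    F.map ((λ_ X).inv ≫ (h ▷ X) ≫ (α_ A (Xᘁ) X).hom ≫ (A ◁ ε_ X (Xᘁ)) ≫ (ρ_ A).hom) =
      (λ_ (F.obj X)).inv ≫ ((ε F ≫ F.map h ≫ δ F A (Xᘁ)) ▷ F.obj X) ≫
        (α_ (F.obj A) (F.obj (Xᘁ)) (F.obj X)).hom ≫
        (F.obj A ◁ (μ F (Xᘁ) X ≫ F.map (ε_ X (Xᘁ)) ≫ η F)) ≫ (ρ_ (F.obj A)).hom := by
  simp only [F.map_comp, map_leftUnitor_inv, map_whiskerRight, map_associator, map_whiskerLeft,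
    map_rightUnitor, assoc, comp_whiskerRight, MonoidalCategory.whiskerLeft_comp]
  simp

/-- Monoidal functor transports the "mate" composite. -/
theorem map_mate {A B Y : C} [HasRightDual Y] (d : A ⊗ Y ⟶ B) :
    F.map ((ρ_ A).inv ≫ (A ◁ η_ Y (Yᘁ)) ≫ (α_ A Y (Yᘁ)).inv ≫ (d ▷ (Yᘁ))) =
      (ρ_ (F.obj A)).inv ≫ (F.obj A ◁ (ε F ≫ F.map (η_ Y (Yᘁ)) ≫ δ F Y (Yᘁ))) ≫
        (α_ (F.obj A) (F.obj Y) (F.obj (Yᘁ))).inv ≫ ((μ F A Y ≫ F.map d) ▷ F.obj (Yᘁ)) ≫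
        μ F B (Yᘁ) := by
  simp only [F.map_comp, map_rightUnitor_inv, map_whiskerLeft, map_associator_inv,
    map_whiskerRight, assoc, comp_whiskerRight, MonoidalCategory.whiskerLeft_comp]
  simp

/-- The mapped zigzag identity in `D`. -/
theorem mapped_zigzag (X : C) [HasRightDual X] :
    ((ε F ≫ F.map (η_ X (Xᘁ)) ≫ δ F X (Xᘁ)) ▷ F.obj X) ≫
      (α_ (F.obj X) (F.obj (Xᘁ)) (F.obj X)).hom ≫
      (F.obj X ◁ (μ F (Xᘁ) X ≫ F.map (ε_ X (Xᘁ)) ≫ η F)) =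
      (λ_ (F.obj X)).hom ≫ (ρ_ (F.obj X)).inv := by
  have key : (δ F X (Xᘁ) ▷ F.obj X) ≫ (α_ (F.obj X) (F.obj (Xᘁ)) (F.obj X)).hom ≫
      (F.obj X ◁ μ F (Xᘁ) X) = μ F (X ⊗ (Xᘁ)) X ≫ F.map (α_ X (Xᘁ) X).hom ≫
        δ F X ((Xᘁ) ⊗ X) := by
    have h := Functor.LaxMonoidal.associativity F X (Xᘁ) X
    calc (δ F X (Xᘁ) ▷ F.obj X) ≫ (α_ (F.obj X) (F.obj (Xᘁ)) (F.obj X)).hom ≫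
          (F.obj X ◁ μ F (Xᘁ) X)
        = (δ F X (Xᘁ) ▷ F.obj X) ≫ ((α_ (F.obj X) (F.obj (Xᘁ)) (F.obj X)).hom ≫
            (F.obj X ◁ μ F (Xᘁ) X) ≫ μ F X ((Xᘁ) ⊗ X)) ≫ δ F X ((Xᘁ) ⊗ X) := by simp
      _ = (δ F X (Xᘁ) ▷ F.obj X) ≫ (μ F X (Xᘁ) ▷ F.obj X ≫ μ F (X ⊗ (Xᘁ)) X ≫
            F.map (α_ X (Xᘁ) X).hom) ≫ δ F X ((Xᘁ) ⊗ X) := by rw [← h]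
      _ = μ F (X ⊗ (Xᘁ)) X ≫ F.map (α_ X (Xᘁ) X).hom ≫ δ F X ((Xᘁ) ⊗ X) := by
            simp [← assoc]
  simp only [comp_whiskerRight, MonoidalCategory.whiskerLeft_comp, assoc]
  slice_lhs 3 5 => rw [key]
  slice_lhs 2 3 => rw [μ_natural_left]
  slice_lhs 5 6 => rw [δ_natural_right]
  have unit : δ F X (𝟙_ C) ≫ (F.obj X ◁ η F) = F.map (ρ_ X).hom ≫ (ρ_ (F.obj X)).inv := by
    rw [map_rightUnitor]; simp
  slice_lhs 6 7 => rw [unit]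
  have zig : (η_ X (Xᘁ)) ▷ X ≫ (α_ X (Xᘁ) X).hom ≫ (X ◁ ε_ X (Xᘁ)) ≫ (ρ_ X).hom =
      (λ_ X).hom := by
    simp
  calc ε F ▷ F.obj X ≫ μ F (𝟙_ C) X ≫ F.map (η_ X (Xᘁ) ▷ X) ≫ F.map (α_ X (Xᘁ) X).hom ≫
        F.map (X ◁ ε_ X (Xᘁ)) ≫ F.map (ρ_ X).hom ≫ (ρ_ (F.obj X)).inv
      = ε F ▷ F.obj X ≫ μ F (𝟙_ C) X ≫ F.map (λ_ X).hom ≫ (ρ_ (F.obj X)).inv := by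
        rw [← zig]; simp only [F.map_comp, assoc]
    _ = (λ_ (F.obj X)).hom ≫ (ρ_ (F.obj X)).inv := by
        slice_lhs 1 3 => rw [← Functor.LaxMonoidal.left_unitality]

end Funct

section Rigid

variable {C : Type u} [Category.{v} C] [MonoidalCategory.{v} C]

theorem epi_whiskerRight_of_epi {W Z : C} (Y : C) [HasRightDual Y] (e : W ⟶ Z) [Epi e] :
    Epi (e ▷ Y) := by
  haveI : PreservesColimitsOfSize.{0, 0} (tensorRight Y) :=
    (tensorRightAdjunction Y (Yᘁ)).leftAdjoint_preservesColimits
  have h : Epi ((tensorRight Y).map e) := inferInstance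
  simpa using h

end Rigid

section Main

variable {k : Type} [Field k]
variable {C : Type u} [Category.{v} C] [MonoidalCategory.{v} C] [BraidedCategory C]
  [Abelian C] [Linear k C] [MonoidalPreadditive C] [MonoidalLinear k C] [RigidCategory C]
variable {D : Type u} [Category.{v} D] [MonoidalCategory.{v} D] [BraidedCategory D]
  [Abelian D] [Linear k D] [MonoidalPreadditive D] [MonoidalLinear k D] [RigidCategory D]
variable (F : C ⥤ D) [F.Braided] [F.Additive] [F.Linear k]
  [PreservesFiniteLimits F] [PreservesFiniteColimits F]

theorem full_at_unit (hEndD : UnitEndIsBase k D)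
    (hnd : IsNondegenerate C) (artin : ∀ X : C, IsArtinianObject X)
    (Z : C) (g : 𝟙_ D ⟶ F.obj Z) :
    ∃ f : 𝟙_ C ⟶ Z, ε F ≫ F.map f = g := by
  classical
  haveI := artin Z
  set S : Set (Subobject Z) :=
    {U | ∃ h : 𝟙_ D ⟶ F.obj (U : C), h ≫ F.map U.arrow = g} with hSdef
  have hne : S.Nonempty := by
    refine ⟨⊤, g ≫ inv (F.map ((⊤ : Subobject Z).arrow)), ?_⟩
    simp
  obtain ⟨U, hU, hmin⟩ := (wellFounded_lt (α := Subobject Z)).has_min S hne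
  obtain ⟨gU, hgU⟩ := hU
  -- minimality in morphism form
  have key : ∀ (W : C) (m : W ⟶ (U : C)), Mono m →
      (∃ h : 𝟙_ D ⟶ F.obj W, h ≫ F.map (m ≫ U.arrow) = g) → IsIso m := by
    intro W m hm hex
    obtain ⟨h, hfac⟩ := hex
    haveI := hm
    have hmem : Subobject.mk (m ≫ U.arrow) ∈ S := by
      refine ⟨h ≫ F.map ((Subobject.underlyingIso (m ≫ U.arrow)).inv), ?_⟩
      rw [assoc, ← F.map_comp, Subobject.underlyingIso_arrow, hfac]
    have hle : Subobject.mk (m ≫ U.arrow) ≤ U := by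
      conv_rhs => rw [← Subobject.mk_arrow U]
      exact Subobject.mk_le_mk_of_comm m rfl
    have heq : Subobject.mk (m ≫ U.arrow) = Subobject.mk U.arrow := by
      rw [Subobject.mk_arrow]
      rcases lt_or_eq_of_le hle with hlt | h'
      · exact absurd hlt (hmin _ hmem)
      · exact h'
    have hcomm := Subobject.ofMkLEMk_comp heq.le
    have hm' : m = (Subobject.isoOfMkEqMk (m ≫ U.arrow) U.arrow heq).hom := by
      rw [← cancel_mono U.arrow]
      simpa [Subobject.isoOfMkEqMk] using hcomm.symm
    rw [hm']
    infer_instance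
  -- transparency of U
  have htrans : ∀ Y : C, (β_ ((U : C)) Y).hom ≫ (β_ Y ((U : C))).hom = 𝟙 _ := by
    intro Y
    set d : ((U : C)) ⊗ Y ⟶ ((U : C)) ⊗ Y :=
      ((β_ ((U : C)) Y).hom ≫ (β_ Y ((U : C))).hom) - 𝟙 _ with hdd
    set d' : ((U : C)) ⟶ (((U : C)) ⊗ Y) ⊗ (Yᘁ) :=
      (ρ_ ((U : C))).inv ≫ (((U : C)) ◁ η_ Y (Yᘁ)) ≫ (α_ ((U : C)) Y (Yᘁ)).inv ≫ (d ▷ (Yᘁ))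
      with hdd'
    have hunit : (β_ (𝟙_ D) (F.obj Y)).hom ≫ (β_ (F.obj Y) (𝟙_ D)).hom = 𝟙 _ := by
      rw [braiding_tensorUnit_left, braiding_tensorUnit_right]
      simp only [assoc, Iso.inv_hom_id_assoc, Iso.hom_inv_id]
    have h1 : (gU ▷ F.obj Y) ≫ μ F ((U : C)) Y ≫
        F.map ((β_ ((U : C)) Y).hom ≫ (β_ Y ((U : C))).hom) =
        (gU ▷ F.obj Y) ≫ μ F ((U : C)) Y := by
      rw [F.map_comp]
      slice_lhs 2 3 => rw [Functor.LaxBraided.braided]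
      slice_lhs 3 4 => rw [Functor.LaxBraided.braided]
      slice_lhs 1 2 => rw [BraidedCategory.braiding_naturality_left]
      slice_lhs 2 3 => rw [BraidedCategory.braiding_naturality_right]
      slice_lhs 1 2 => rw [hunit]
      simp
    have hz : (gU ▷ F.obj Y) ≫ (μ F ((U : C)) Y ≫ F.map d) = 0 := by
      rw [hdd, F.map_sub, F.map_id]
      simp only [Preadditive.comp_sub, Preadditive.sub_comp, comp_id]
      rw [sub_eq_zero]
      simpa [assoc] using h1
    have hgd : gU ≫ F.map d' = 0 := by
      rw [hdd', map_mate F d]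
      simp only [reassoc_of% (rightUnitor_inv_naturality gU)]
      simp only [reassoc_of% ((whisker_exchange gU (ε F ≫ F.map (η_ Y (Yᘁ)) ≫ δ F Y (Yᘁ))).symm)]
      simp only [reassoc_of% (associator_inv_naturality_left gU (F.obj Y) (F.obj (Yᘁ)))]
      have w4 : ((gU ▷ F.obj Y) ▷ F.obj (Yᘁ)) ≫
          ((μ F ((U : C)) Y ≫ F.map d) ▷ F.obj (Yᘁ)) = 0 := by
        rw [← comp_whiskerRight, hz]
        simp
      simp only [reassoc_of% w4]
      simp
    have hk : IsIso (kernel.ι d') := by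
      apply key _ (kernel.ι d') inferInstance
      refine ⟨kernel.lift (F.map d') gU hgd ≫ inv (kernelComparison d' F), ?_⟩
      have hmid : inv (kernelComparison d' F) ≫ F.map (kernel.ι d') =
          kernel.ι (F.map d') := by
        rw [← kernelComparison_comp_ι d' F, IsIso.inv_hom_id_assoc]
      rw [show F.map (kernel.ι d' ≫ U.arrow) = F.map (kernel.ι d') ≫ F.map U.arrow from
        F.map_comp _ _]
      simp only [assoc]
      rw [reassoc_of% hmid, kernel.lift_ι_assoc]
      exact hgU
    have hd'0 : d' = 0 := by
      haveI := hk
      rw [← cancel_epi (kernel.ι d'), kernel.condition, comp_zero]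
    have hd0 : d = 0 := by
      have hh1 : (tensorRightHomEquiv ((U : C)) Y (Yᘁ) (((U : C)) ⊗ Y)) d = 0 := hd'0
      have hh2 := congrArg (tensorRightHomEquiv ((U : C)) Y (Yᘁ) (((U : C)) ⊗ Y)).symm hh1
      rw [Equiv.symm_apply_apply] at hh2
      rw [hh2]
      simp [tensorRightHomEquiv]
    have hfin : ((β_ ((U : C)) Y).hom ≫ (β_ Y ((U : C))).hom) - 𝟙 _ = 0 := by
      rw [← hdd]; exact hd0
    exact sub_eq_zero.mp hfin
  obtain ⟨n, p, q, hpq, hsum⟩ := hnd ((U : C)) htrans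
  choose a ha using fun i => hEndD.2 (gU ≫ F.map (q i) ≫ η F)
  refine ⟨∑ i, a i • (p i ≫ U.arrow), ?_⟩
  have hqi : ∀ i, gU ≫ F.map (q i) = a i • ε F := by
    intro i
    have h1 : gU ≫ F.map (q i) = (gU ≫ F.map (q i) ≫ η F) ≫ ε F := by
      rw [assoc, assoc, Functor.Monoidal.η_ε, comp_id]
    rw [h1, ← ha i]
    simp [Linear.smul_comp]
  calc ε F ≫ F.map (∑ i, a i • (p i ≫ U.arrow))
      = ∑ i, a i • (ε F ≫ F.map (p i) ≫ F.map U.arrow) := by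
        rw [Functor.map_sum]
        rw [Preadditive.comp_sum]
        refine Finset.sum_congr rfl fun i _ => ?_
        rw [Functor.map_smul, Linear.comp_smul, F.map_comp]
    _ = ∑ i, (gU ≫ F.map (q i)) ≫ F.map (p i) ≫ F.map U.arrow := by
        refine Finset.sum_congr rfl fun i _ => ?_
        rw [hqi i, Linear.smul_comp]
    _ = (gU ≫ F.map (𝟙 ((U : C)))) ≫ F.map U.arrow := by
        rw [← hsum]
        simp [Functor.map_sum, Preadditive.sum_comp, Preadditive.comp_sum, Functor.map_comp,
          assoc]
    _ = g := by simpa using hgU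

theorem point_faithful (hEndD : UnitEndIsBase k D) (hnd : IsNondegenerate C)
    {W : C} (h : 𝟙_ C ⟶ W) (hh : F.map h = 0) : h = 0 := by
  have hfac : factorThruImage h ≫ image.ι h = h := image.fac h
  have hm0 : F.map (image.ι h) = 0 := by
    have h2 : F.map (factorThruImage h) ≫ F.map (image.ι h) = 0 := by
      rw [← F.map_comp, hfac, hh]
    exact zero_of_epi_comp _ h2
  have hI : 𝟙 (F.obj (image h)) = 0 := by
    rw [← cancel_mono (F.map (image.ι h)), id_comp, zero_comp, hm0]
  have htrans : ∀ Y : C, (β_ (image h) Y).hom ≫ (β_ Y (image h)).hom = 𝟙 _ := by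
    intro Y
    haveI : Epi ((factorThruImage h) ▷ Y) := epi_whiskerRight_of_epi Y (factorThruImage h)
    rw [← cancel_epi ((factorThruImage h) ▷ Y), comp_id, ← assoc,
      BraidedCategory.braiding_naturality_left, assoc,
      BraidedCategory.braiding_naturality_right]
    simp only [braiding_tensorUnit_left, braiding_tensorUnit_right, assoc,
      Iso.inv_hom_id_assoc, Iso.hom_inv_id_assoc]
  obtain ⟨n, p, q, hpq, hsum⟩ := hnd (image h) htrans
  rcases Nat.eq_zero_or_pos n with hn | hn
  · have h10 : 𝟙 (image h) = 0 := by
      rw [← hsum]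
      subst hn
      simp
    calc h = factorThruImage h ≫ 𝟙 (image h) ≫ image.ι h := by rw [id_comp, hfac]
      _ = 0 := by rw [h10, zero_comp, comp_zero]
  · exfalso
    set i0 : Fin n := ⟨0, hn⟩
    have hpq0 : p i0 ≫ q i0 = 𝟙 (𝟙_ C) := by simpa using hpq i0 i0
    have hz : F.map (p i0) ≫ F.map (q i0) = 0 := by
      calc F.map (p i0) ≫ F.map (q i0)
          = F.map (p i0) ≫ 𝟙 (F.obj (image h)) ≫ F.map (q i0) := by rw [id_comp]
        _ = 0 := by rw [hI, zero_comp, comp_zero]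
    have h2 : 𝟙 (F.obj (𝟙_ C)) = 0 := by
      rw [← F.map_id, ← hpq0, F.map_comp, hz]
    have h3 : (1 : k) • 𝟙 (𝟙_ D) = (0 : k) • 𝟙 (𝟙_ D) := by
      have h4 : 𝟙 (𝟙_ D) = 0 := by
        calc 𝟙 (𝟙_ D) = ε F ≫ η F := (Functor.Monoidal.ε_η (F := F)).symm
          _ = ε F ≫ 𝟙 (F.obj (𝟙_ C)) ≫ η F := by rw [id_comp]
          _ = 0 := by rw [h2, zero_comp, comp_zero]
      simp [h4]
    exact one_ne_zero (hEndD.1 h3)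

theorem map_eq_zero (hEndD : UnitEndIsBase k D) (hnd : IsNondegenerate C)
    {X Y : C} (f : X ⟶ Y) (hf : F.map f = 0) : f = 0 := by
  have hcur : F.map (η_ X (Xᘁ) ≫ (f ▷ (Xᘁ))) = 0 := by
    rw [F.map_comp, Functor.Monoidal.map_whiskerRight, hf]
    simp
  have h0 : η_ X (Xᘁ) ≫ (f ▷ (Xᘁ)) = 0 := point_faithful F hEndD hnd _ hcur
  have hun := uncur_cur (η_ X (Xᘁ)) (ε_ X (Xᘁ))
    (ExactPairing.evaluation_coevaluation X (Xᘁ)) f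
  rw [← hun, h0]
  simp

theorem full_map (hEndD : UnitEndIsBase k D) (hnd : IsNondegenerate C)
    (artin : ∀ X : C, IsArtinianObject X) {X Y : C} (g : F.obj X ⟶ F.obj Y) :
    ∃ f : X ⟶ Y, F.map f = g := by
  obtain ⟨fh, hfh⟩ := full_at_unit F hEndD hnd artin (Y ⊗ (Xᘁ))
    (ε F ≫ F.map (η_ X (Xᘁ)) ≫ δ F X (Xᘁ) ≫ ((g ▷ F.obj (Xᘁ)) ≫ μ F Y (Xᘁ)))
  refine ⟨(λ_ X).inv ≫ (fh ▷ X) ≫ (α_ Y (Xᘁ) X).hom ≫ (Y ◁ ε_ X (Xᘁ)) ≫ (ρ_ Y).hom, ?_⟩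
  rw [map_uncur F fh]
  have hmid : ε F ≫ F.map fh ≫ δ F Y (Xᘁ) =
      (ε F ≫ F.map (η_ X (Xᘁ)) ≫ δ F X (Xᘁ)) ≫ (g ▷ F.obj (Xᘁ)) := by
    rw [← assoc, hfh]
    simp
  rw [hmid]
  exact uncur_cur _ _ (mapped_zigzag F X) g

theorem full_and_faithful (hEndD : UnitEndIsBase k D) (hnd : IsNondegenerate C)
    (artin : ∀ X : C, IsArtinianObject X) : F.Full ∧ F.Faithful := by
  constructor
  · exact ⟨fun {X Y} g => full_map F hEndD hnd artin g⟩
  · refine ⟨fun {X Y} f f' hff' => ?_⟩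
    have hz : f - f' = 0 := by
      refine map_eq_zero F hEndD hnd (f - f') ?_
      rw [Functor.map_sub, hff', sub_self]
    rw [← sub_eq_zero]
    exact hz

end Main

/-- **Statement 15.**  Let `C` and `D` be braided finite tensor categories over an
algebraically closed field `k`, with `C` non-degenerate, and let `F : C ⥤ D` be a
braided tensor functor (a `k`-linear exact strong monoidal braided functor).  Then
`F` is full, hence fully faithful. -/
theorem braided_functor_from_nondegenerate_is_full (k : Type) [Field k] [IsAlgClosed k]
    {C : Type u} [Category.{v} C] [MonoidalCategory.{v} C] [BraidedCategory C]
    [Abelian C] [Linear k C] [MonoidalPreadditive C] [MonoidalLinear k C]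
    [RigidCategory C] (finC : FiniteCategoryData k C) (hEndC : UnitEndIsBase k C)
    {D : Type u} [Category.{v} D] [MonoidalCategory.{v} D] [BraidedCategory D]
    [Abelian D] [Linear k D] [MonoidalPreadditive D] [MonoidalLinear k D]
    [RigidCategory D] (finD : FiniteCategoryData k D) (hEndD : UnitEndIsBase k D)
    (hnd : IsNondegenerate C)
    (F : C ⥤ D) [F.Monoidal] [F.Braided] [F.Additive] [F.Linear k]
    [PreservesFiniteLimits F] [PreservesFiniteColimits F] :
    F.Full ∧ F.Faithful := by
  exact full_and_faithful F hEndD hnd finC.artinian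

end Paper
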